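/- Let m : ℕ and let V ⊆ (Fin m → ZMod 2) be a doubly even code spanned by linearly independent vectors v₁, v₂, v₃ such that: |v_i| ≡ 0 (mod 8) for i = 1,2,3; |supp v_i ∩ supp v_j| ≡ 2 (mod 4) for 1 ≤ i < j ≤ 3; |supp v₁ ∩ supp v₂ ∩ supp v₃| is odd; and every coordinate k ∈ Fin m lies in the support of some element of V. Then m ≥ 11, and if m = 11 then some permutation of the 11 coordinates maps V onto the code spanned by the indicator vectors of {1,...,8}, {1,2,3,4,5,6,9,10} and {1,2,3,4,5,7,9,11}. -/

import Mathlib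

set_option linter.all false

open Finset

/-- The support of a vector in `F₂^m`, as a finset of coordinates. -/
def supp {m : ℕ} (v : Fin m → ZMod 2) : Finset (Fin m) :=
  Finset.univ.filter fun k => v k ≠ 0

/-- The indicator vector in `F₂^m` of a set of (1-based) coordinate labels. -/
def indVec {m : ℕ} (S : Finset ℕ) : Fin m → ZMod 2 :=
  fun k => if (k : ℕ) + 1 ∈ S then 1 else 0

/-- The linear automorphism of `F₂^m` permuting coordinates by `π`. -/
def permMap {m : ℕ} (π : Equiv.Perm (Fin m)) :
    (Fin m → ZMod 2) →ₗ[ZMod 2] (Fin m → ZMod 2) where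
  toFun v := v ∘ π
  map_add' _ _ := rfl
  map_smul' _ _ := rfl

lemma sum_zmod2' (f : ZMod 2 → ℕ) : ∑ x : ZMod 2, f x = f 0 + f 1 := by
  have h : (univ : Finset (ZMod 2)) = {0, 1} := by decide
  rw [h, Finset.sum_insert (by decide), Finset.sum_singleton]

lemma count_fiberwise' {m : ℕ} (φ : Fin m → ZMod 2 × ZMod 2 × ZMod 2)
    (p : ZMod 2 × ZMod 2 × ZMod 2 → Prop) [DecidablePred p] :
    (univ.filter fun k => p (φ k)).card
      = ∑ t : ZMod 2 × ZMod 2 × ZMod 2,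
          if p t then (univ.filter fun k => φ k = t).card else 0 := by
  rw [Finset.card_eq_sum_card_fiberwise (f := φ) (t := univ) (fun x _ => mem_univ _)]
  refine Finset.sum_congr rfl fun t _ => ?_
  by_cases hp : p t
  · rw [if_pos hp]; congr 1; ext k; simp only [Finset.mem_filter, Finset.mem_univ, true_and]
    exact ⟨fun h => h.2, fun h => ⟨h ▸ hp, h⟩⟩
  · rw [if_neg hp, Finset.card_eq_zero]
    ext k; simp only [Finset.mem_filter, Finset.notMem_empty, iff_false, not_and,
      Finset.mem_univ, true_and]
    rintro h1 rfl; exact hp h1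

lemma exists_perm' {α β : Type*} [Fintype α] [DecidableEq α] [DecidableEq β]
    (f g : α → β)
    (h : ∀ t, (univ.filter fun k => f k = t).card = (univ.filter fun k => g k = t).card) :
    ∃ π : Equiv.Perm α, ∀ k, f (π k) = g k := by
  have e : ∀ t : β,
      {k // k ∈ univ.filter fun k => g k = t} ≃ {k // k ∈ univ.filter fun k => f k = t} :=
    fun t => Finset.equivOfCardEq (h t).symm
  set p : α → α :=
    fun k => ((e (g k)) ⟨k, by simp⟩ : {x // x ∈ univ.filter fun k' => f k' = g k}) with hp
  have step : ∀ (t : β) (x : α) (hx : g x = t), p x = ↑(e t ⟨x, by simp [hx]⟩) := by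
    rintro t x rfl; rfl
  have hf : ∀ k, f (p k) = g k := fun k => by
    have := ((e (g k)) ⟨k, by simp⟩).2
    simp only [Finset.mem_filter] at this
    exact this.2
  have hinj : Function.Injective p := by
    intro a b hab
    have hg : g a = g b := by rw [← hf a, ← hf b, hab]
    rw [step (g a) a rfl, step (g a) b hg.symm] at hab
    have : (e (g a)) ⟨a, by simp⟩ = (e (g a)) ⟨b, by simp [hg]⟩ := Subtype.ext hab
    exact congrArg Subtype.val ((e (g a)).injective this)
  exact ⟨Equiv.ofBijective p (Finite.injective_iff_bijective.mp hinj), fun k => hf k⟩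

set_option maxHeartbeats 1000000 in
/-- Theorem 4.4, case of `C₃³` (characteristic vector `(000111)`): a doubly even
code realizing `C₃³` has degree at least 11, and in degree 11 it is, up to a
permutation of coordinates, the basic representation given in the paper. -/
theorem stmt14 (m : ℕ) (v₁ v₂ v₃ : Fin m → ZMod 2)
    (hli : LinearIndependent (ZMod 2) ![v₁, v₂, v₃])
    (hde4 : ∀ v ∈ Submodule.span (ZMod 2) ({v₁, v₂, v₃} : Set (Fin m → ZMod 2)),
      (supp v).card % 4 = 0)
    (hde2 : ∀ u ∈ Submodule.span (ZMod 2) ({v₁, v₂, v₃} : Set (Fin m → ZMod 2)),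
      ∀ v ∈ Submodule.span (ZMod 2) ({v₁, v₂, v₃} : Set (Fin m → ZMod 2)),
      (supp u ∩ supp v).card % 2 = 0)
    (h1 : (supp v₁).card % 8 = 0) (h2 : (supp v₂).card % 8 = 0)
    (h3 : (supp v₃).card % 8 = 0)
    (h12 : (supp v₁ ∩ supp v₂).card % 4 = 2)
    (h13 : (supp v₁ ∩ supp v₃).card % 4 = 2)
    (h23 : (supp v₂ ∩ supp v₃).card % 4 = 2)
    (h123 : Odd (supp v₁ ∩ supp v₂ ∩ supp v₃).card)
    (hcov : ∀ k : Fin m, ∃ v ∈ Submodule.span (ZMod 2)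
      ({v₁, v₂, v₃} : Set (Fin m → ZMod 2)), v k ≠ 0) :
    11 ≤ m ∧ (m = 11 → ∃ π : Equiv.Perm (Fin m),
      Submodule.map (permMap π)
          (Submodule.span (ZMod 2) ({v₁, v₂, v₃} : Set (Fin m → ZMod 2))) =
        Submodule.span (ZMod 2) ({indVec {1, 2, 3, 4, 5, 6, 7, 8}, indVec {1, 2, 3, 4, 5, 6, 9, 10},
          indVec {1, 2, 3, 4, 5, 7, 9, 11}} : Set (Fin m → ZMod 2))) := by
  classical
  set φ : Fin m → ZMod 2 × ZMod 2 × ZMod 2 := fun k => (v₁ k, v₂ k, v₃ k) with hφ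
  set N : ZMod 2 × ZMod 2 × ZMod 2 → ℕ := fun t => (univ.filter fun k => φ k = t).card with hN
  -- weights
  have hs1 : (supp v₁).card = N (1,0,0) + N (1,0,1) + N (1,1,0) + N (1,1,1) := by
    have h : supp v₁ = univ.filter fun k => (φ k).1 ≠ 0 := rfl
    rw [h, count_fiberwise' φ (fun t => t.1 ≠ 0), Fintype.sum_prod_type]
    simp +decide only [hN, Fintype.sum_prod_type, sum_zmod2', if_true, if_false]
    ring
  have hs2 : (supp v₂).card = N (0,1,0) + N (0,1,1) + N (1,1,0) + N (1,1,1) := by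
    have h : supp v₂ = univ.filter fun k => (φ k).2.1 ≠ 0 := rfl
    rw [h, count_fiberwise' φ (fun t => t.2.1 ≠ 0), Fintype.sum_prod_type]
    simp +decide only [hN, Fintype.sum_prod_type, sum_zmod2', if_true, if_false]
    ring
  have hs3 : (supp v₃).card = N (0,0,1) + N (0,1,1) + N (1,0,1) + N (1,1,1) := by
    have h : supp v₃ = univ.filter fun k => (φ k).2.2 ≠ 0 := rfl
    rw [h, count_fiberwise' φ (fun t => t.2.2 ≠ 0), Fintype.sum_prod_type]
    simp +decide only [hN, Fintype.sum_prod_type, sum_zmod2', if_true, if_false]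
    ring
  -- pairwise intersections
  have hi12 : (supp v₁ ∩ supp v₂).card = N (1,1,0) + N (1,1,1) := by
    have h : supp v₁ ∩ supp v₂ = univ.filter fun k => (φ k).1 ≠ 0 ∧ (φ k).2.1 ≠ 0 := by
      ext k; simp [supp, hφ]
    rw [h, count_fiberwise' φ (fun t => t.1 ≠ 0 ∧ t.2.1 ≠ 0), Fintype.sum_prod_type]
    simp +decide only [hN, Fintype.sum_prod_type, sum_zmod2', if_true, if_false]
    ring
  have hi13 : (supp v₁ ∩ supp v₃).card = N (1,0,1) + N (1,1,1) := by
    have h : supp v₁ ∩ supp v₃ = univ.filter fun k => (φ k).1 ≠ 0 ∧ (φ k).2.2 ≠ 0 := by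
      ext k; simp [supp, hφ]
    rw [h, count_fiberwise' φ (fun t => t.1 ≠ 0 ∧ t.2.2 ≠ 0), Fintype.sum_prod_type]
    simp +decide only [hN, Fintype.sum_prod_type, sum_zmod2', if_true, if_false]
    ring
  have hi23 : (supp v₂ ∩ supp v₃).card = N (0,1,1) + N (1,1,1) := by
    have h : supp v₂ ∩ supp v₃ = univ.filter fun k => (φ k).2.1 ≠ 0 ∧ (φ k).2.2 ≠ 0 := by
      ext k; simp [supp, hφ]
    rw [h, count_fiberwise' φ (fun t => t.2.1 ≠ 0 ∧ t.2.2 ≠ 0), Fintype.sum_prod_type]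
    simp +decide only [hN, Fintype.sum_prod_type, sum_zmod2', if_true, if_false]
    ring
  have hi123 : (supp v₁ ∩ supp v₂ ∩ supp v₃).card = N (1,1,1) := by
    have h : supp v₁ ∩ supp v₂ ∩ supp v₃
        = univ.filter fun k => ((φ k).1 ≠ 0 ∧ (φ k).2.1 ≠ 0) ∧ (φ k).2.2 ≠ 0 := by
      ext k; simp [supp]; tauto
    rw [h, count_fiberwise' φ (fun t => (t.1 ≠ 0 ∧ t.2.1 ≠ 0) ∧ t.2.2 ≠ 0),
      Fintype.sum_prod_type]
    simp +decide only [hN, Fintype.sum_prod_type, sum_zmod2', if_true, if_false]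
    omega
  -- total
  have hm : m = N (0,0,0) + N (0,0,1) + N (0,1,0) + N (0,1,1)
      + N (1,0,0) + N (1,0,1) + N (1,1,0) + N (1,1,1) := by
    have h : (univ : Finset (Fin m)) = univ.filter fun k => True := by simp
    have h2 : m = (univ.filter fun (k : Fin m) => True).card := by
      rw [← h, Finset.card_univ, Fintype.card_fin]
    rw [h2]
    have h3 : (univ.filter fun (k : Fin m) => True)
        = univ.filter fun k => (fun _ : ZMod 2 × ZMod 2 × ZMod 2 => True) (φ k) := rfl
    rw [h3, count_fiberwise' φ (fun _ => True), Fintype.sum_prod_type]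
    simp +decide only [hN, Fintype.sum_prod_type, sum_zmod2', if_true, if_false]
    ring
  -- the empty region
  have hz : N (0,0,0) = 0 := by
    rw [hN, Finset.card_eq_zero]
    by_contra hne
    obtain ⟨k, hk⟩ := Finset.nonempty_of_ne_empty hne
    simp only [Finset.mem_filter, Finset.mem_univ, true_and, hφ, Prod.mk.injEq] at hk
    obtain ⟨hk1, hk2, hk3⟩ := hk
    obtain ⟨v, hv, hvk⟩ := hcov k
    have hle : Submodule.span (ZMod 2) ({v₁, v₂, v₃} : Set (Fin m → ZMod 2))
        ≤ LinearMap.ker (LinearMap.proj (R := ZMod 2) (φ := fun _ : Fin m => ZMod 2) k) := by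
      rw [Submodule.span_le]
      rintro x hx
      simp only [Set.mem_insert_iff, Set.mem_singleton_iff] at hx
      rcases hx with rfl | rfl | rfl <;>
        simp [LinearMap.mem_ker, hk1, hk2, hk3]
    have := hle hv
    simp only [LinearMap.mem_ker, LinearMap.proj_apply] at this
    exact hvk this
  -- arithmetic facts
  rw [hs1] at h1; rw [hs2] at h2; rw [hs3] at h3
  rw [hi12] at h12; rw [hi13] at h13; rw [hi23] at h23
  rw [hi123] at h123
  obtain ⟨j, hj⟩ := h123
  refine ⟨by omega, fun hm11 => ?_⟩
  subst hm11
  -- the unique solution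
  have e111 : N (1,1,1) = 5 := by omega
  have e100 : N (1,0,0) = 1 := by omega
  have e010 : N (0,1,0) = 1 := by omega
  have e001 : N (0,0,1) = 1 := by omega
  have e110 : N (1,1,0) = 1 := by omega
  have e101 : N (1,0,1) = 1 := by omega
  have e011 : N (0,1,1) = 1 := by omega
  -- the target fibers
  set w₁ : Fin 11 → ZMod 2 := indVec {1, 2, 3, 4, 5, 6, 7, 8} with hw1
  set w₂ : Fin 11 → ZMod 2 := indVec {1, 2, 3, 4, 5, 6, 9, 10} with hw2
  set w₃ : Fin 11 → ZMod 2 := indVec {1, 2, 3, 4, 5, 7, 9, 11} with hw3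
  have hw : ∀ t : ZMod 2 × ZMod 2 × ZMod 2,
      (univ.filter fun k : Fin 11 => (w₁ k, w₂ k, w₃ k) = t).card
        = if t = (1,1,1) then 5 else if t = (0,0,0) then 0 else 1 := by
    decide
  have hfib : ∀ t, (univ.filter fun k => φ k = t).card
      = (univ.filter fun k : Fin 11 => (w₁ k, w₂ k, w₃ k) = t).card := by
    intro t
    rw [hw t]
    have hx : ∀ x : ZMod 2, x = 0 ∨ x = 1 := by decide
    obtain ⟨x, y, z⟩ := t
    rcases hx x with rfl | rfl <;> rcases hx y with rfl | rfl <;> rcases hx z with rfl | rfl <;>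
      simp +decide only [if_true, if_false] <;>
      first
        | exact hz | exact e001 | exact e010 | exact e011
        | exact e100 | exact e101 | exact e110 | exact e111
  obtain ⟨π, hπ⟩ := exists_perm' φ (fun k => (w₁ k, w₂ k, w₃ k)) hfib
  have e1 : v₁ ∘ π = w₁ := funext fun k => congrArg Prod.fst (hπ k)
  have e2 : v₂ ∘ π = w₂ := funext fun k => congrArg (fun t => t.2.1) (hπ k)
  have e3 : v₃ ∘ π = w₃ := funext fun k => congrArg (fun t => t.2.2) (hπ k)
  refine ⟨π, ?_⟩
  rw [Submodule.map_span]
  congr 1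
  rw [Set.image_insert_eq, Set.image_insert_eq, Set.image_singleton]
  show ({v₁ ∘ π, v₂ ∘ π, v₃ ∘ π} : Set (Fin 11 → ZMod 2)) = _
  rw [e1, e2, e3]
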